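/- arXiv:2409.10159 — 3 statements merged into one kernel-verified Lean document; each statement's English description precedes it below -/
import Mathlib

section
/- The blocks {0,1,2,8} + 2i (mod 10) and {1,0,5,7} + 2i (mod 10), for i = 0,...,4, form a regular-graph design with λ=1 and block size 4 of order 10 whose doubled pairs are the edges of the Petersen graph: each of the 15 edge pairs occurs in exactly 2 of the 10 blocks and each of the remaining 30 pairs occurs in exactly 1 block, and the doubled-pair graph is 3-regular with girth 5. -/
open scoped Classical

def B0 : Multiset (Finset (ZMod 10)) :=
      ((Multiset.range 5).map fun i =>
        ({0 + 2 * (i : ZMod 10), 1 + 2 * (i : ZMod 10), 2 + 2 * (i : ZMod 10),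
          8 + 2 * (i : ZMod 10)} : Finset (ZMod 10))) +
      ((Multiset.range 5).map fun i =>
        ({0 + 2 * (i : ZMod 10), 1 + 2 * (i : ZMod 10), 5 + 2 * (i : ZMod 10),
          7 + 2 * (i : ZMod 10)} : Finset (ZMod 10)))

def cnt0 : ZMod 10 → ZMod 10 → ℕ := fun x y =>
      Multiset.card (B0.filter fun b => x ∈ b ∧ y ∈ b)

def nbr (x : ZMod 10) : List (ZMod 10) :=
  [[1,2,8],[0,5,7],[0,3,4],[2,7,9],[2,5,6],[1,4,9],[4,7,8],[1,3,6],[0,6,9],[3,5,8]].getD x.val []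

def pAdj (x y : ZMod 10) : Bool := y ∈ nbr x

def PG : SimpleGraph (ZMod 10) where
  Adj x y := pAdj x y
  symm := ⟨by intro x y; revert x y; decide⟩
  loopless := ⟨by intro x; revert x; decide⟩

instance : DecidableRel PG.Adj := fun _ _ => inferInstanceAs (Decidable (_ = true))

lemma adj_iff : ∀ x y : ZMod 10, PG.Adj x y ↔ x ≠ y ∧ cnt0 x y = 2 := by decide

lemma cnt_one_or_two : ∀ x y : ZMod 10, x ≠ y → cnt0 x y = 1 ∨ cnt0 x y = 2 := by decide

lemma pg_reg : PG.IsRegularOfDegree 3 := by intro v; revert v; decide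

lemma no_tri : ∀ a b c : ZMod 10, PG.Adj a b → PG.Adj b c → ¬ PG.Adj c a := by decide

lemma no_quad : ∀ a b c d : ZMod 10, a ≠ c → b ≠ d → PG.Adj a b → PG.Adj b c → PG.Adj c d →
    ¬ PG.Adj d a := by decide

lemma pg_not_acyclic : ¬ PG.IsAcyclic := by
  intro h
  have h01 : PG.Adj 0 1 := by decide
  have h15 : PG.Adj 1 5 := by decide
  have h59 : PG.Adj 5 9 := by decide
  have h98 : PG.Adj 9 8 := by decide
  have h80 : PG.Adj 8 0 := by decide
  refine h (SimpleGraph.Walk.cons h01 (.cons h15 (.cons h59 (.cons h98 (.cons h80 .nil))))) ?_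
  constructor
  · constructor
    · constructor
      simp [SimpleGraph.Walk.edges, SimpleGraph.Walk.darts]
      decide
    · simp
  · simp [SimpleGraph.Walk.support]
    decide

lemma pg_girth : 5 ≤ PG.girth := by
  obtain ⟨a, w, hc, hg⟩ := SimpleGraph.exists_girth_eq_length.mpr pg_not_acyclic
  rw [hg]
  by_contra hlt
  push_neg at hlt
  have h3 := hc.three_le_length
  have hlen : w.length = 3 ∨ w.length = 4 := by omega
  clear hlt h3 hg
  rcases w with _ | ⟨h1, w⟩
  · simp at hlen
  rcases w with _ | ⟨h2, w⟩
  · simp at hlen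
  rcases w with _ | ⟨h3, w⟩
  · simp at hlen
  rcases w with _ | ⟨h4, w⟩
  · exact no_tri _ _ _ h1 h2 h3
  rcases w with _ | ⟨h5, w⟩
  · have hnd := hc.2
    simp [SimpleGraph.Walk.support] at hnd
    exact no_quad _ _ _ _ (by tauto) (by tauto) h1 h2 h3 h4
  · simp at hlen

/-- the ten blocks obtained from {0,1,2,8} and {0,1,5,7} under
x ↦ x + 2 (mod 10) form a regular-graph design of order 10 with λ = 1 and
block size 4 whose doubled pairs form a 3-regular graph of girth ≥ 5
(the Petersen graph). -/
theorem stmt_15 :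
    let B : Multiset (Finset (ZMod 10)) :=
      ((Multiset.range 5).map fun i =>
        ({0 + 2 * (i : ZMod 10), 1 + 2 * (i : ZMod 10), 2 + 2 * (i : ZMod 10),
          8 + 2 * (i : ZMod 10)} : Finset (ZMod 10))) +
      ((Multiset.range 5).map fun i =>
        ({0 + 2 * (i : ZMod 10), 1 + 2 * (i : ZMod 10), 5 + 2 * (i : ZMod 10),
          7 + 2 * (i : ZMod 10)} : Finset (ZMod 10)))
    let cnt : ZMod 10 → ZMod 10 → ℕ := fun x y =>
      Multiset.card (B.filter fun b => x ∈ b ∧ y ∈ b)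
    ∃ G : SimpleGraph (ZMod 10),
      (∀ x y : ZMod 10, G.Adj x y ↔ x ≠ y ∧ cnt x y = 2) ∧
      (∀ x y : ZMod 10, x ≠ y → cnt x y = 1 ∨ cnt x y = 2) ∧
      G.IsRegularOfDegree 3 ∧ 5 ≤ G.girth := by
  intro B cnt
  have hc : cnt = cnt0 := rfl
  exact ⟨PG, by rw [hc]; exact adj_iff, by rw [hc]; exact cnt_one_or_two, fun v => by convert pg_reg v using 2, pg_girth⟩
end

section
/- Suppose m ≥ 1 and there exists a set T of m triples of the form (0, x, z) with 0 < x < z such that the multiset union of {x, z−x, z} over T is exactly {3, 4, ..., 3m+2} (each once) when m ≡ 0,1 (mod 4), or {3, 4, ..., 3m+1, 3m+3} when m ≡ 2,3 (mod 4). Let n = 6m+5. Then the translates modulo n of the triples {0,1,n−1} and {0,x,z} for (0,x,z) ∈ T under x ↦ x+1 (mod n) form a regular-graph design with λ=1 and block size 3 for the cycle Cₙ. -/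
open scoped Classical

lemma stmt16_ite_or (P Q : Prop) [Decidable P] [Decidable Q] (h : ¬(P ∧ Q)) :
    (if P ∨ Q then (1:ℕ) else 0) = (if P then 1 else 0) + (if Q then 1 else 0) := by
  by_cases hP : P <;> by_cases hQ : Q
  · exact absurd ⟨hP, hQ⟩ h
  · simp [hP, hQ]
  · simp [hP, hQ]
  · simp [hP, hQ]

lemma stmt16_countP_bind {α β : Type*} (s : Multiset α) (f : α → Multiset β)
    (p : β → Prop) [DecidablePred p] :
    Multiset.countP p (s.bind f) = (s.map fun a => Multiset.countP p (f a)).sum := by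
  refine Multiset.induction_on s ?_ fun a t IH => ?_
  · simp
  · simp [Multiset.cons_bind, IH]

lemma stmt16_countP_eq_sum_map {α : Type*} (s : Multiset α) (q : α → Prop) [DecidablePred q] :
    Multiset.countP q s = (s.map fun a => if q a then (1:ℕ) else 0).sum := by
  refine Multiset.induction_on s ?_ fun a t IH => ?_
  · simp
  · simp [Multiset.countP_cons, IH]; omega

lemma stmt16_count_shift (N v : ℕ) :
    Multiset.countP (fun k => v = k + 3) (Multiset.range N)
      = if 3 ≤ v ∧ v < N + 3 then 1 else 0 := by
  induction N with
  | zero => simp only [Multiset.range_zero, Multiset.countP_zero]; rw [if_neg (by omega)]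
  | succ N ih =>
    rw [Multiset.range_succ, Multiset.countP_cons, ih]
    split_ifs <;> omega

lemma stmt16_count_shift' (m v : ℕ) : ∀ N, N ≤ 3*m →
    Multiset.countP (fun k => v = (6*m+5) - (k + 3)) (Multiset.range N)
      = if 6*m+3 - N ≤ v ∧ v ≤ 6*m+2 then 1 else 0 := by
  intro N
  induction N with
  | zero => intro _; simp only [Multiset.range_zero, Multiset.countP_zero]; rw [if_neg (by omega)]
  | succ N ih =>
    intro hN
    rw [Multiset.range_succ, Multiset.countP_cons, ih (by omega)]
    split_ifs <;> omega

lemma stmt16_countP_range_cast (n : ℕ) [NeZero n] (q : ZMod n → Prop) [DecidablePred q] :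
    Multiset.countP (fun i : ℕ => q (i : ZMod n)) (Multiset.range n)
      = (Finset.univ.filter q).card := by
  have h1 : Multiset.countP (fun i : ℕ => q (i : ZMod n)) (Multiset.range n)
      = ((Finset.range n).filter (fun i : ℕ => q (i : ZMod n))).card := by
    rw [Multiset.countP_eq_card_filter]; rfl
  rw [h1]
  refine Finset.card_bij' (fun i _ => (i : ZMod n)) (fun z _ => z.val) ?_ ?_ ?_ ?_
  · intro a ha
    simp only [Finset.mem_filter, Finset.mem_range] at ha
    simp only [Finset.mem_filter, Finset.mem_univ, true_and]
    exact ha.2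
  · intro z hz
    simp only [Finset.mem_filter, Finset.mem_univ, true_and] at hz
    simp only [Finset.mem_filter, Finset.mem_range]
    exact ⟨ZMod.val_lt z, by rwa [ZMod.natCast_zmod_val]⟩
  · intro a ha
    simp only [Finset.mem_filter, Finset.mem_range] at ha
    exact ZMod.val_cast_of_lt ha.1
  · intro z _
    exact ZMod.natCast_zmod_val z

lemma stmt16_count_block (n : ℕ) [NeZero n] (x y a b : ZMod n) (hxy : x ≠ y)
    (ha : a ≠ 0) (hb : b ≠ 0) (hab : a ≠ b) :
    Multiset.countP
      (fun i : ℕ => x ∈ ({(i : ZMod n), (i : ZMod n) + a, (i : ZMod n) + b} : Finset (ZMod n))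
        ∧ y ∈ ({(i : ZMod n), (i : ZMod n) + a, (i : ZMod n) + b} : Finset (ZMod n)))
      (Multiset.range n)
    = (if y - x = a then 1 else 0) + (if y - x = b then 1 else 0)
      + ((if y - x = -a then 1 else 0) + (if y - x = b - a then 1 else 0))
      + ((if y - x = -b then 1 else 0) + (if y - x = a - b then 1 else 0)) := by
  have h0 : Multiset.countP
      (fun i : ℕ => x ∈ ({(i : ZMod n), (i : ZMod n) + a, (i : ZMod n) + b} : Finset (ZMod n))
        ∧ y ∈ ({(i : ZMod n), (i : ZMod n) + a, (i : ZMod n) + b} : Finset (ZMod n)))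
      (Multiset.range n)
      = (Finset.univ.filter (fun j : ZMod n =>
          x ∈ ({j, j + a, j + b} : Finset (ZMod n))
            ∧ y ∈ ({j, j + a, j + b} : Finset (ZMod n)))).card := by
    convert stmt16_countP_range_cast n (fun j : ZMod n =>
      x ∈ ({j, j + a, j + b} : Finset (ZMod n)) ∧ y ∈ ({j, j + a, j + b} : Finset (ZMod n))) using 2
  rw [h0]
  have hset : Finset.univ.filter (fun j : ZMod n =>
        x ∈ ({j, j + a, j + b} : Finset (ZMod n)) ∧ y ∈ ({j, j + a, j + b} : Finset (ZMod n)))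
      = ({x, x - a, x - b} : Finset (ZMod n)).filter
          (fun j => y ∈ ({j, j + a, j + b} : Finset (ZMod n))) := by
    ext j
    simp only [Finset.mem_filter, Finset.mem_univ, true_and, Finset.mem_insert,
      Finset.mem_singleton]
    constructor
    · rintro ⟨h1, h2⟩
      refine ⟨?_, h2⟩
      rcases h1 with h | h | h
      · exact Or.inl h.symm
      · right; left; rw [h]; ring
      · right; right; rw [h]; ring
    · rintro ⟨h1, h2⟩
      refine ⟨?_, h2⟩
      rcases h1 with h | h | h
      · exact Or.inl h.symm
      · right; left; rw [h]; ring
      · right; right; rw [h]; ring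
  rw [hset, Finset.card_filter]
  have hx1 : x ∉ ({x - a, x - b} : Finset (ZMod n)) := by
    simp only [Finset.mem_insert, Finset.mem_singleton]
    push_neg
    exact ⟨fun h => ha (sub_eq_self.mp h.symm), fun h => hb (sub_eq_self.mp h.symm)⟩
  have hx2 : (x - a) ∉ ({x - b} : Finset (ZMod n)) := by
    simp only [Finset.mem_singleton]
    intro h
    exact hab (sub_right_inj.mp h)
  rw [Finset.sum_insert hx1, Finset.sum_insert hx2, Finset.sum_singleton]
  simp only [Finset.mem_insert, Finset.mem_singleton]
  have e1 : (y = x ∨ y = x + a ∨ y = x + b) ↔ (y - x = a ∨ y - x = b) := by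
    constructor
    · rintro (h | h | h)
      · exact absurd h.symm hxy
      · exact Or.inl (by linear_combination h)
      · exact Or.inr (by linear_combination h)
    · rintro (h | h)
      · exact Or.inr (Or.inl (by linear_combination h))
      · exact Or.inr (Or.inr (by linear_combination h))
  have e2 : (y = x - a ∨ y = x - a + a ∨ y = x - a + b) ↔ (y - x = -a ∨ y - x = b - a) := by
    constructor
    · rintro (h | h | h)
      · exact Or.inl (by linear_combination h)
      · exact absurd (by linear_combination h : y = x).symm hxy
      · exact Or.inr (by linear_combination h)
    · rintro (h | h)
      · exact Or.inl (by linear_combination h)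
      · exact Or.inr (Or.inr (by linear_combination h))
  have e3 : (y = x - b ∨ y = x - b + a ∨ y = x - b + b) ↔ (y - x = -b ∨ y - x = a - b) := by
    constructor
    · rintro (h | h | h)
      · exact Or.inl (by linear_combination h)
      · exact Or.inr (by linear_combination h)
      · exact absurd (by linear_combination h : y = x).symm hxy
    · rintro (h | h)
      · exact Or.inl (by linear_combination h)
      · exact Or.inr (Or.inl (by linear_combination h))
  rw [if_congr e1 rfl rfl, if_congr e2 rfl rfl, if_congr e3 rfl rfl]
  rw [stmt16_ite_or _ _ (fun h => hab (h.1.symm.trans h.2)),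
    stmt16_ite_or _ _ (fun h => hb (by linear_combination - h.1.symm.trans h.2)),
    stmt16_ite_or _ _ (fun h => ha (by linear_combination - h.1.symm.trans h.2))]
  ring

set_option maxHeartbeats 2000000 in
/-- given a set T of m triples (0, x, z) whose differences cover
{3,...,3m+2} (resp. {3,...,3m+1,3m+3}) exactly once, the translates modulo
n = 6m + 5 of {0, 1, n-1} and of the triples of T form a regular-graph design
with λ = 1 and block size 3 for the cycle Cₙ. -/
theorem stmt_16 (m : ℕ) (hm : 1 ≤ m) (T : Finset (ℕ × ℕ))
    (hcard : T.card = m)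
    (hpos : ∀ p ∈ T, 0 < p.1 ∧ p.1 < p.2)
    (hdiff : (T.val.bind fun p => ({p.1, p.2 - p.1, p.2} : Multiset ℕ)) =
      (if m % 4 = 0 ∨ m % 4 = 1 then
        (Multiset.range (3 * m)).map (· + 3)
      else
        (Multiset.range (3 * m - 1)).map (· + 3) + {3 * m + 3})) :
    let B : Multiset (Finset (ZMod (6 * m + 5))) :=
      ((Multiset.range (6 * m + 5)).map fun i =>
        ({(i : ZMod (6 * m + 5)), (i : ZMod (6 * m + 5)) + 1,
          (i : ZMod (6 * m + 5)) - 1} : Finset (ZMod (6 * m + 5)))) +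
      ((Multiset.range (6 * m + 5)).bind fun i =>
        T.val.map fun p =>
          ({(i : ZMod (6 * m + 5)),
            (i : ZMod (6 * m + 5)) + (p.1 : ZMod (6 * m + 5)),
            (i : ZMod (6 * m + 5)) + (p.2 : ZMod (6 * m + 5))} :
            Finset (ZMod (6 * m + 5))))
    ∀ x y : ZMod (6 * m + 5), x ≠ y →
      Multiset.card (B.filter fun b => x ∈ b ∧ y ∈ b) =
        if y = x + 1 ∨ x = y + 1 then 2 else 1 := by
  intro B x y hxy
  haveI hnz : NeZero (6 * m + 5) := ⟨by omega⟩
  haveI hfact : Fact (1 < 6 * m + 5) := ⟨by omega⟩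
  -- a generalized value of (y - x).val
  obtain ⟨v, hv0, hvlt, hcast⟩ : ∃ v : ℕ, v ≠ 0 ∧ v < 6 * m + 5 ∧
      ∀ s : ℕ, s < 6 * m + 5 → ((y - x = (s : ZMod (6 * m + 5))) ↔ v = s) := by
    refine ⟨(y - x).val, ?_, ZMod.val_lt _, ?_⟩
    · intro h
      rw [ZMod.val_eq_zero, sub_eq_zero] at h
      exact hxy h.symm
    · intro s hs
      constructor
      · intro h; rw [h, ZMod.val_cast_of_lt hs]
      · intro h; rw [← h, ZMod.natCast_zmod_val]
  have hneg : ∀ s : ℕ, 0 < s → s < 6 * m + 5 →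
      ((y - x = -(s : ZMod (6 * m + 5))) ↔ v = 6 * m + 5 - s) := by
    intro s h1 h2
    have hrw : -(s : ZMod (6 * m + 5)) = ((6 * m + 5 - s : ℕ) : ZMod (6 * m + 5)) := by
      rw [Nat.cast_sub h2.le, ZMod.natCast_self, zero_sub]
    rw [hrw, hcast _ (by omega)]
  have hne : ∀ s : ℕ, 0 < s → s < 6 * m + 5 → ((s : ZMod (6 * m + 5)) ≠ 0) := by
    intro s h1 h2 h
    rw [ZMod.natCast_eq_zero_iff] at h
    have := Nat.le_of_dvd h1 h
    omega
  have hrange : ∀ s ∈ (T.val.bind fun p => ({p.1, p.2 - p.1, p.2} : Multiset ℕ)),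
      3 ≤ s ∧ s ≤ 3 * m + 3 := by
    intro s hs
    rw [hdiff] at hs
    by_cases hc : m % 4 = 0 ∨ m % 4 = 1
    · rw [if_pos hc] at hs
      simp only [Multiset.mem_map, Multiset.mem_range] at hs
      obtain ⟨k, hk, rfl⟩ := hs; omega
    · rw [if_neg hc] at hs
      simp only [Multiset.mem_add, Multiset.mem_map, Multiset.mem_range,
        Multiset.mem_singleton] at hs
      rcases hs with ⟨k, hk, rfl⟩ | rfl <;> omega
  have hmemT : ∀ p ∈ T, (3 ≤ p.1 ∧ p.1 ≤ 3 * m + 3) ∧ (3 ≤ p.2 - p.1 ∧ p.2 - p.1 ≤ 3 * m + 3)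
      ∧ (3 ≤ p.2 ∧ p.2 ≤ 3 * m + 3) := by
    intro p hp
    refine ⟨hrange _ ?_, hrange _ ?_, hrange _ ?_⟩ <;>
      exact Multiset.mem_bind.mpr ⟨p, Finset.mem_val.mpr hp, by simp⟩
  -- split off the two families
  unfold B
  simp only [bind, Multiset.pure_def, Multiset.bind_def, Multiset.bind_singleton]
  rw [Multiset.filter_add, Multiset.card_add, ← Multiset.countP_eq_card_filter,
    ← Multiset.countP_eq_card_filter, Multiset.map_map, Multiset.countP_map,
    ← Multiset.countP_eq_card_filter]
  simp only [Function.comp, sub_eq_add_neg]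
  -- base blocks
  have h1ne : (1 : ZMod (6 * m + 5)) ≠ 0 := one_ne_zero
  have hm1ne : (-1 : ZMod (6 * m + 5)) ≠ 0 := neg_ne_zero.mpr one_ne_zero
  have h1m1 : (1 : ZMod (6 * m + 5)) ≠ -1 := by
    intro h
    have h2 : ((2 : ℕ) : ZMod (6 * m + 5)) = 0 := by push_cast; linear_combination h
    exact hne 2 (by omega) (by omega) h2
  rw [stmt16_count_block (6 * m + 5) x y 1 (-1) hxy h1ne hm1ne h1m1]
  -- rewrite base conditions in terms of v
  have hb1 : (y - x = (1 : ZMod (6 * m + 5))) ↔ v = 1 := by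
    have := hcast 1 (by omega); rwa [Nat.cast_one] at this
  have hb2 : (y - x = (-1 : ZMod (6 * m + 5))) ↔ v = 6 * m + 4 := by
    have := hneg 1 (by omega) (by omega)
    rw [Nat.cast_one] at this
    rw [this]
    omega
  have hb3 : (y - x = (-1 : ZMod (6 * m + 5)) - 1) ↔ v = 6 * m + 3 := by
    have h' : ((-1 : ZMod (6 * m + 5)) - 1) = -((2 : ℕ) : ZMod (6 * m + 5)) := by
      push_cast; ring
    rw [h']
    have := hneg 2 (by omega) (by omega)
    rw [this]
    omega
  have hb4 : (y - x = -(-1 : ZMod (6 * m + 5))) ↔ v = 1 := by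
    have h' : (-(-1 : ZMod (6 * m + 5))) = ((1 : ℕ) : ZMod (6 * m + 5)) := by push_cast; ring
    rw [h', hcast 1 (by omega)]
  have hb5 : (y - x = (1 : ZMod (6 * m + 5)) - (-1)) ↔ v = 2 := by
    have h' : ((1 : ZMod (6 * m + 5)) - (-1)) = ((2 : ℕ) : ZMod (6 * m + 5)) := by
      push_cast; ring
    rw [h', hcast 2 (by omega)]
  rw [if_congr hb1 rfl rfl, if_congr hb2 rfl rfl,
    if_congr hb3 rfl rfl, if_congr hb4 rfl rfl, if_congr hb5 rfl rfl]
  -- the T blocks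
  rw [stmt16_countP_bind]
  have inner : ∀ i : ℕ,
      Multiset.countP (fun b : Finset (ZMod (6 * m + 5)) => x ∈ b ∧ y ∈ b)
        (T.val.map fun p : ℕ × ℕ =>
          ({(i : ZMod (6 * m + 5)), (i : ZMod (6 * m + 5)) + (p.1 : ZMod (6 * m + 5)),
            (i : ZMod (6 * m + 5)) + (p.2 : ZMod (6 * m + 5))} : Finset (ZMod (6 * m + 5))))
      = ∑ p ∈ T, (if x ∈ ({(i : ZMod (6 * m + 5)), (i : ZMod (6 * m + 5)) + (p.1 : ZMod (6 * m + 5)),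
            (i : ZMod (6 * m + 5)) + (p.2 : ZMod (6 * m + 5))} : Finset (ZMod (6 * m + 5)))
          ∧ y ∈ ({(i : ZMod (6 * m + 5)), (i : ZMod (6 * m + 5)) + (p.1 : ZMod (6 * m + 5)),
            (i : ZMod (6 * m + 5)) + (p.2 : ZMod (6 * m + 5))} : Finset (ZMod (6 * m + 5)))
          then 1 else 0) := by
    intro i
    rw [Multiset.countP_map, ← Multiset.countP_eq_card_filter, stmt16_countP_eq_sum_map,
      Finset.sum_eq_multiset_sum]
  rw [Multiset.map_congr rfl (fun i _ => inner i)]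
  rw [show (Multiset.range (6 * m + 5)) = (Finset.range (6 * m + 5)).val from
    (Finset.range_val _).symm, ← Finset.sum_eq_multiset_sum, Finset.sum_comm]
  -- per-triple count
  have perp : ∀ p ∈ T,
      (∑ i ∈ Finset.range (6 * m + 5),
        (if x ∈ ({(i : ZMod (6 * m + 5)), (i : ZMod (6 * m + 5)) + (p.1 : ZMod (6 * m + 5)),
            (i : ZMod (6 * m + 5)) + (p.2 : ZMod (6 * m + 5))} : Finset (ZMod (6 * m + 5)))
          ∧ y ∈ ({(i : ZMod (6 * m + 5)), (i : ZMod (6 * m + 5)) + (p.1 : ZMod (6 * m + 5)),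
            (i : ZMod (6 * m + 5)) + (p.2 : ZMod (6 * m + 5))} : Finset (ZMod (6 * m + 5)))
          then 1 else 0))
      = (((if v = p.1 then 1 else 0) + (if v = p.2 - p.1 then 1 else 0)
            + (if v = p.2 then 1 else 0))
        + ((if v = 6 * m + 5 - p.1 then 1 else 0) + (if v = 6 * m + 5 - (p.2 - p.1) then 1 else 0)
            + (if v = 6 * m + 5 - p.2 then 1 else 0))) := by
    intro p hp
    obtain ⟨⟨hA1, hA2⟩, ⟨hB1, hB2⟩, hC1, hC2⟩ := hmemT p hp
    have hplt : p.1 < p.2 := (hpos p hp).2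
    have hsum : (∑ i ∈ Finset.range (6 * m + 5),
        (if x ∈ ({(i : ZMod (6 * m + 5)), (i : ZMod (6 * m + 5)) + (p.1 : ZMod (6 * m + 5)),
            (i : ZMod (6 * m + 5)) + (p.2 : ZMod (6 * m + 5))} : Finset (ZMod (6 * m + 5)))
          ∧ y ∈ ({(i : ZMod (6 * m + 5)), (i : ZMod (6 * m + 5)) + (p.1 : ZMod (6 * m + 5)),
            (i : ZMod (6 * m + 5)) + (p.2 : ZMod (6 * m + 5))} : Finset (ZMod (6 * m + 5)))
          then 1 else 0))
        = Multiset.countP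
            (fun i : ℕ => x ∈ ({(i : ZMod (6 * m + 5)),
                (i : ZMod (6 * m + 5)) + (p.1 : ZMod (6 * m + 5)),
                (i : ZMod (6 * m + 5)) + (p.2 : ZMod (6 * m + 5))} : Finset (ZMod (6 * m + 5)))
              ∧ y ∈ ({(i : ZMod (6 * m + 5)),
                (i : ZMod (6 * m + 5)) + (p.1 : ZMod (6 * m + 5)),
                (i : ZMod (6 * m + 5)) + (p.2 : ZMod (6 * m + 5))} : Finset (ZMod (6 * m + 5))))
            (Multiset.range (6 * m + 5)) := by
      rw [stmt16_countP_eq_sum_map, Finset.sum_eq_multiset_sum, Finset.range_val]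
    rw [hsum]
    have ha' : (p.1 : ZMod (6 * m + 5)) ≠ 0 := hne p.1 (by omega) (by omega)
    have hb' : (p.2 : ZMod (6 * m + 5)) ≠ 0 := hne p.2 (by omega) (by omega)
    have hd' : ((p.2 - p.1 : ℕ) : ZMod (6 * m + 5)) ≠ 0 := hne (p.2 - p.1) (by omega) (by omega)
    have hab' : (p.1 : ZMod (6 * m + 5)) ≠ (p.2 : ZMod (6 * m + 5)) := by
      intro h
      apply hd'
      rw [Nat.cast_sub hplt.le, ← h, sub_self]
    rw [stmt16_count_block (6 * m + 5) x y (p.1 : ZMod (6 * m + 5)) (p.2 : ZMod (6 * m + 5))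
      hxy ha' hb' hab']
    have c1 := hcast p.1 (by omega)
    have c2 := hcast p.2 (by omega)
    have c3 := hneg p.1 (by omega) (by omega)
    have c5 := hneg p.2 (by omega) (by omega)
    have c4 : (y - x = (p.2 : ZMod (6 * m + 5)) - (p.1 : ZMod (6 * m + 5)))
        ↔ v = p.2 - p.1 := by
      rw [← Nat.cast_sub hplt.le]; exact hcast _ (by omega)
    have c6 : (y - x = (p.1 : ZMod (6 * m + 5)) - (p.2 : ZMod (6 * m + 5)))
        ↔ v = 6 * m + 5 - (p.2 - p.1) := by
      rw [show ((p.1 : ZMod (6 * m + 5)) - (p.2 : ZMod (6 * m + 5)))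
          = -((p.2 - p.1 : ℕ) : ZMod (6 * m + 5)) by rw [Nat.cast_sub hplt.le]; ring]
      exact hneg _ (by omega) (by omega)
    rw [if_congr c1 rfl rfl, if_congr c2 rfl rfl, if_congr c3 rfl rfl, if_congr c4 rfl rfl,
      if_congr c5 rfl rfl, if_congr c6 rfl rfl]
    ring
  rw [Finset.sum_congr rfl perp, Finset.sum_add_distrib]
  -- positive side
  have hposSum : (∑ p ∈ T, ((if v = p.1 then 1 else 0) + (if v = p.2 - p.1 then 1 else 0)
        + (if v = p.2 then 1 else 0)))
      = Multiset.countP (fun s : ℕ => v = s)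
          (T.val.bind fun p => ({p.1, p.2 - p.1, p.2} : Multiset ℕ)) := by
    rw [stmt16_countP_bind]
    rw [show (T.val.map fun p : ℕ × ℕ =>
        Multiset.countP (fun s : ℕ => v = s) ({p.1, p.2 - p.1, p.2} : Multiset ℕ)).sum
      = ∑ p ∈ T, Multiset.countP (fun s : ℕ => v = s) ({p.1, p.2 - p.1, p.2} : Multiset ℕ) from
      (Finset.sum_eq_multiset_sum _ _).symm]
    refine Finset.sum_congr rfl fun p _ => ?_
    simp only [Multiset.insert_eq_cons, ← Multiset.cons_zero, Multiset.countP_cons, Multiset.countP_zero]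
    omega
  have hnegSum : (∑ p ∈ T, ((if v = 6 * m + 5 - p.1 then 1 else 0)
        + (if v = 6 * m + 5 - (p.2 - p.1) then 1 else 0)
        + (if v = 6 * m + 5 - p.2 then 1 else 0)))
      = Multiset.countP (fun s : ℕ => v = 6 * m + 5 - s)
          (T.val.bind fun p => ({p.1, p.2 - p.1, p.2} : Multiset ℕ)) := by
    rw [stmt16_countP_bind]
    rw [show (T.val.map fun p : ℕ × ℕ =>
        Multiset.countP (fun s : ℕ => v = 6 * m + 5 - s) ({p.1, p.2 - p.1, p.2} : Multiset ℕ)).sum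
      = ∑ p ∈ T, Multiset.countP (fun s : ℕ => v = 6 * m + 5 - s)
          ({p.1, p.2 - p.1, p.2} : Multiset ℕ) from (Finset.sum_eq_multiset_sum _ _).symm]
    refine Finset.sum_congr rfl fun p _ => ?_
    simp only [Multiset.insert_eq_cons, ← Multiset.cons_zero, Multiset.countP_cons, Multiset.countP_zero]
    omega
  rw [hposSum, hnegSum, hdiff]
  -- goal condition in terms of v
  have egoal : (y = x + 1 ∨ x = y + 1) ↔ (v = 1 ∨ v = 6 * m + 4) := by
    constructor
    · rintro (h | h)
      · exact Or.inl (hb1.mp (by linear_combination h))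
      · exact Or.inr (hb2.mp (by linear_combination - h))
    · rintro (h | h)
      · have := hb1.mpr h; left; linear_combination this
      · have := hb2.mpr h; right; linear_combination - this
  rw [if_congr egoal rfl rfl]
  -- final case analysis
  by_cases hc : m % 4 = 0 ∨ m % 4 = 1
  · rw [if_pos hc, Multiset.countP_map, ← Multiset.countP_eq_card_filter,
      Multiset.countP_map, ← Multiset.countP_eq_card_filter]
    rw [show Multiset.countP (fun k : ℕ => v = k + 3) (Multiset.range (3 * m))
        = if 3 ≤ v ∧ v < 3 * m + 3 then 1 else 0 from stmt16_count_shift _ _]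
    rw [show Multiset.countP (fun k : ℕ => v = 6 * m + 5 - (k + 3)) (Multiset.range (3 * m))
        = if 6 * m + 3 - 3 * m ≤ v ∧ v ≤ 6 * m + 2 then 1 else 0 from
        stmt16_count_shift' m v (3 * m) (by omega)]
    split_ifs <;> omega
  · rw [if_neg hc, Multiset.countP_add, Multiset.countP_add, Multiset.countP_map,
      ← Multiset.countP_eq_card_filter, Multiset.countP_map, ← Multiset.countP_eq_card_filter,
      show Multiset.countP (fun s : ℕ => v = s) {3 * m + 3} = if v = 3 * m + 3 then 1 else 0 by
        rw [← Multiset.cons_zero, Multiset.countP_cons, Multiset.countP_zero, zero_add],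
      show Multiset.countP (fun s : ℕ => v = 6 * m + 5 - s) {3 * m + 3}
          = if v = 6 * m + 5 - (3 * m + 3) then 1 else 0 by
        rw [← Multiset.cons_zero, Multiset.countP_cons, Multiset.countP_zero, zero_add]]
    rw [show Multiset.countP (fun k : ℕ => v = k + 3) (Multiset.range (3 * m - 1))
        = if 3 ≤ v ∧ v < (3 * m - 1) + 3 then 1 else 0 from stmt16_count_shift _ _]
    rw [show Multiset.countP (fun k : ℕ => v = 6 * m + 5 - (k + 3)) (Multiset.range (3 * m - 1))
        = if 6 * m + 3 - (3 * m - 1) ≤ v ∧ v ≤ 6 * m + 2 then 1 else 0 from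
        stmt16_count_shift' m v (3 * m - 1) (by omega)]
    split_ifs <;> omega
end

section
/- Suppose there exist regular-graph designs with λ=1 and block size k = δ+1 of orders g and m (for δ-regular graphs with girth ≥ 5), and a (δ+1)-GDD of type gᵘ m¹. Then there exists a regular-graph design with λ=1 and block size δ+1 of order gu + m, for a δ-regular graph with girth ≥ 5 that is the disjoint union of the graphs on the groups. -/
open scoped Classical

/-- A regular-graph design with λ = 1 and block size δ + 1 for the graph `G`:
adjacent pairs occur in exactly 2 blocks, non-adjacent pairs in exactly 1. -/
def IsRGDesign {V : Type*} [DecidableEq V] (δ : ℕ) (G : SimpleGraph V)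
    (B : Multiset (Finset V)) : Prop :=
  (∀ b ∈ B, b.card = δ + 1) ∧
  ∀ x y : V, x ≠ y →
    Multiset.card (B.filter fun b => x ∈ b ∧ y ∈ b) =
      if G.Adj x y then 2 else 1

/-- There is a regular-graph design with λ = 1 of order n for some δ-regular
graph with girth at least 5. -/
def ExistsRGD (δ n : ℕ) : Prop :=
  ∃ (G : SimpleGraph (Fin n)) (B : Multiset (Finset (Fin n))),
    G.IsRegularOfDegree δ ∧ 5 ≤ G.girth ∧ IsRGDesign δ G B

lemma sym2_injOn {V W : Type*} (f : V → W) {S : Set V} (hinj : Set.InjOn f S) :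
    ∀ e₁ e₂ : Sym2 V, (∀ z ∈ e₁, z ∈ S) → (∀ z ∈ e₂, z ∈ S) →
      Sym2.map f e₁ = Sym2.map f e₂ → e₁ = e₂ := by
  refine Sym2.ind fun a b => Sym2.ind fun c d => ?_
  intro h1 h2 heq
  simp only [Sym2.map_pair_eq, Sym2.eq_iff] at heq ⊢
  have ha : a ∈ S := h1 a (by simp)
  have hb : b ∈ S := h1 b (by simp)
  have hc : c ∈ S := h2 c (by simp)
  have hd : d ∈ S := h2 d (by simp)
  rcases heq with ⟨h3, h4⟩ | ⟨h3, h4⟩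
  · exact Or.inl ⟨hinj ha hc h3, hinj hb hd h4⟩
  · exact Or.inr ⟨hinj ha hd h3, hinj hb hc h4⟩

lemma walk_lift {V W : Type*} {G : SimpleGraph V} {H : SimpleGraph W} (f : V → W) (S : Set V)
    (hS : ∀ ⦃a b⦄, G.Adj a b → a ∈ S → b ∈ S)
    (hhom : ∀ ⦃a b⦄, a ∈ S → b ∈ S → G.Adj a b → H.Adj (f a) (f b)) :
    ∀ {x y : V} (p : G.Walk x y), x ∈ S →
      (∀ z ∈ p.support, z ∈ S) ∧
      ∃ q : H.Walk (f x) (f y), q.length = p.length ∧ q.support = p.support.map f ∧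
        q.edges = p.edges.map (Sym2.map f) := by
  intro x y p
  induction p with
  | nil =>
    intro hx
    exact ⟨by simpa using hx, SimpleGraph.Walk.nil, by simp⟩
  | @cons a b c h p ih =>
    intro ha
    have hb : b ∈ S := hS h ha
    obtain ⟨hsupp, q, hl, hs, he⟩ := ih hb
    refine ⟨?_, SimpleGraph.Walk.cons (hhom ha hb h) q, by simp [hl], by simp [hs], ?_⟩
    · intro z hz
      simp only [SimpleGraph.Walk.support_cons, List.mem_cons] at hz
      rcases hz with rfl | hz
      exacts [ha, hsupp z hz]
    · simp [he, Sym2.map_pair_eq]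

lemma cycle_lift {V W : Type*} {G : SimpleGraph V} {H : SimpleGraph W} (f : V → W) (S : Set V)
    (hS : ∀ ⦃a b⦄, G.Adj a b → a ∈ S → b ∈ S)
    (hhom : ∀ ⦃a b⦄, a ∈ S → b ∈ S → G.Adj a b → H.Adj (f a) (f b))
    (hinj : Set.InjOn f S) {x : V} (p : G.Walk x x) (hx : x ∈ S) (hp : p.IsCycle) :
    ∃ q : H.Walk (f x) (f x), q.IsCycle ∧ q.length = p.length := by
  obtain ⟨hsupp, q, hl, hs, he⟩ := walk_lift f S hS hhom p hx
  refine ⟨q, ?_, hl⟩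
  rw [SimpleGraph.Walk.isCycle_def, SimpleGraph.Walk.isTrail_def] at hp ⊢
  obtain ⟨ht, hnil, hnd⟩ := hp
  refine ⟨?_, ?_, ?_⟩
  · rw [he]
    refine List.Nodup.map_on ?_ ht
    intro e1 he1 e2 he2 heq
    refine sym2_injOn f hinj e1 e2 ?_ ?_ heq
    · intro z hz
      obtain ⟨a, b⟩ := e1
      rcases (Sym2.mem_iff).mp hz with rfl | rfl
      · exact hsupp _ (p.fst_mem_support_of_mem_edges he1)
      · exact hsupp _ (p.snd_mem_support_of_mem_edges he1)
    · intro z hz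
      obtain ⟨a, b⟩ := e2
      rcases (Sym2.mem_iff).mp hz with rfl | rfl
      · exact hsupp _ (p.fst_mem_support_of_mem_edges he2)
      · exact hsupp _ (p.snd_mem_support_of_mem_edges he2)
  · intro hqnil
    apply hnil
    rw [← SimpleGraph.Walk.nil_iff_eq_nil, ← SimpleGraph.Walk.length_eq_zero_iff]
    have : q.length = 0 := by rw [hqnil]; rfl
    omega
  · rw [hs, ← List.map_tail]
    refine List.Nodup.map_on ?_ hnd
    intro z1 hz1 z2 hz2 heq
    exact hinj (hsupp _ (List.mem_of_mem_tail hz1)) (hsupp _ (List.mem_of_mem_tail hz2)) heq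

lemma girth_le_of_cycle {α : Type*} {G : SimpleGraph α} {x : α} {w : G.Walk x x}
    (h : w.IsCycle) : G.girth ≤ w.length := by
  have h1 : G.egirth ≤ (w.length : ℕ∞) := by
    rw [SimpleGraph.egirth]
    exact iInf_le_of_le x (iInf_le_of_le w (iInf_le_of_le h (le_refl _)))
  have h2 := ENat.toNat_le_toNat h1 (by simp)
  simpa [SimpleGraph.girth] using h2

lemma filter_card_sum {ι α : Type*} (s : Finset ι) (f : ι → Multiset α) (p : α → Prop)
    [DecidablePred p] :
    Multiset.card ((∑ t ∈ s, f t).filter p) = ∑ t ∈ s, Multiset.card ((f t).filter p) := by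
  induction s using Finset.cons_induction with
  | empty => simp
  | cons a t ha ih => rw [Finset.sum_cons, Finset.sum_cons, Multiset.filter_add, Multiset.card_add, ih]

set_option maxHeartbeats 1000000 in
lemma master {N : ℕ} {ι : Type} [Fintype ι] [Nonempty ι] (δ : ℕ) (sz : ι → ℕ)
    (P : ι → Finset (Fin N)) (GT : ∀ t, SimpleGraph (Fin (sz t)))
    (BT : ∀ t, Multiset (Finset (Fin (sz t))))
    (hPcard : ∀ t, (P t).card = sz t)
    (hPdisj : ∀ t t', t ≠ t' → Disjoint (P t) (P t'))
    (hPcover : ∀ x, ∃ t, x ∈ P t)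
    (hreg : ∀ t, (GT t).IsRegularOfDegree δ)
    (hgirth : ∀ t, 5 ≤ (GT t).girth)
    (hdes : ∀ t, IsRGDesign δ (GT t) (BT t))
    (ℬ : Finset (Finset (Fin N)))
    (hsize : ∀ b ∈ ℬ, b.card = δ + 1)
    (hsame : ∀ x y : Fin N, x ≠ y → (∃ t, x ∈ P t ∧ y ∈ P t) → ∀ b ∈ ℬ, ¬(x ∈ b ∧ y ∈ b))
    (hcross : ∀ x y : Fin N, x ≠ y → ¬(∃ t, x ∈ P t ∧ y ∈ P t) →
      (ℬ.filter fun b => x ∈ b ∧ y ∈ b).card = 1) :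
    ∃ (G : SimpleGraph (Fin N)) (B : Multiset (Finset (Fin N))),
      G.IsRegularOfDegree δ ∧ 5 ≤ G.girth ∧ IsRGDesign δ G B ∧
      ∀ x y, G.Adj x y → ∃ t, x ∈ P t ∧ y ∈ P t := by
  classical
  -- the equivalences
  let e : ∀ t, (P t : Type) ≃ Fin (sz t) := fun t => Finset.equivFinOfCardEq (hPcard t)
  let emb : ∀ t, Fin (sz t) → Fin N := fun t a => ((e t).symm a : Fin N)
  have hembmem : ∀ t a, emb t a ∈ P t := fun t a => ((e t).symm a).2
  have hembinj : ∀ t, Function.Injective (emb t) := fun t a b h =>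
    (e t).symm.injective (Subtype.ext h)
  have hmk : ∀ t a, (⟨emb t a, hembmem t a⟩ : (P t : Type)) = (e t).symm a := fun t a => rfl
  have he_emb : ∀ t a, e t ⟨emb t a, hembmem t a⟩ = a := fun t a => by
    rw [hmk, Equiv.apply_symm_apply]
  have hemb_e : ∀ t x (hx : x ∈ P t), emb t (e t ⟨x, hx⟩) = x := fun t x hx => by
    show (((e t).symm (e t ⟨x, hx⟩)) : Fin N) = x
    rw [Equiv.symm_apply_apply]
  have huniq : ∀ {x : Fin N} {t t'}, x ∈ P t → x ∈ P t' → t = t' := by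
    intro x t t' h h'
    by_contra hne
    exact Finset.disjoint_left.mp (hPdisj t t' hne) h h'
  -- the graph
  let G : SimpleGraph (Fin N) :=
    { Adj := fun x y => ∃ (t : ι) (hx : x ∈ P t) (hy : y ∈ P t),
        (GT t).Adj (e t ⟨x, hx⟩) (e t ⟨y, hy⟩)
      symm := ⟨by rintro x y ⟨t, hx, hy, h⟩; exact ⟨t, hy, hx, h.symm⟩⟩
      loopless := ⟨by rintro x ⟨t, hx, hy, h⟩; exact (GT t).irrefl h⟩ }
  have hadjpart : ∀ {x y}, G.Adj x y → ∃ t, x ∈ P t ∧ y ∈ P t := by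
    rintro x y ⟨t, hx, hy, -⟩; exact ⟨t, hx, hy⟩
  have hadj : ∀ {x y : Fin N} {t} (hx : x ∈ P t) (hy : y ∈ P t),
      G.Adj x y ↔ (GT t).Adj (e t ⟨x, hx⟩) (e t ⟨y, hy⟩) := by
    intro x y t hx hy
    constructor
    · rintro ⟨t', hx', hy', h⟩
      obtain rfl : t' = t := huniq hx' hx
      exact h
    · intro h; exact ⟨t, hx, hy, h⟩
  have hadj_emb : ∀ {t a b}, (GT t).Adj a b → G.Adj (emb t a) (emb t b) := by
    intro t a b h
    exact ⟨t, hembmem t a, hembmem t b, by rw [he_emb, he_emb]; exact h⟩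
  -- regularity
  have hregG : ∀ (F : ∀ v : Fin N, Fintype (G.neighborSet v)) (x : Fin N),
      @SimpleGraph.degree _ G x (F x) = δ := by
    intro F x
    obtain ⟨t, hx⟩ := hPcover x
    have hnf : G.neighborFinset x
        = ((GT t).neighborFinset (e t ⟨x, hx⟩)).image (emb t) := by
      ext y
      simp only [SimpleGraph.mem_neighborFinset, Finset.mem_image]
      constructor
      · rintro ⟨t', hx', hy', h⟩
        obtain rfl : t' = t := huniq hx' hx
        exact ⟨_, h, hemb_e _ y hy'⟩
      · rintro ⟨a, ha, rfl⟩
        exact ⟨t, hx, hembmem t a, by rw [he_emb]; exact ha⟩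
    rw [SimpleGraph.degree, hnf, Finset.card_image_of_injective _ (hembinj t)]
    exact hreg t _
  -- girth
  have hnotacyclic : ¬ G.IsAcyclic := by
    obtain ⟨t0⟩ := (inferInstance : Nonempty ι)
    have h0 : ¬ (GT t0).IsAcyclic := by
      intro h
      have := (SimpleGraph.girth_eq_zero).mpr h
      have h5 := hgirth t0
      omega
    obtain ⟨a, w, hw, -⟩ := SimpleGraph.exists_girth_eq_length.mpr h0
    obtain ⟨q, hq, -⟩ := cycle_lift (emb t0) Set.univ (fun _ _ _ _ => trivial)
      (fun a b _ _ h => hadj_emb h) ((hembinj t0).injOn) w trivial hw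
    exact fun hac => hac q hq
  have hgirthG : 5 ≤ G.girth := by
    obtain ⟨a, w, hw, hlen⟩ := SimpleGraph.exists_girth_eq_length.mpr hnotacyclic
    obtain ⟨t, ha⟩ := hPcover a
    set f : Fin N → Fin (sz t) := fun z => if h : z ∈ P t then e t ⟨z, h⟩ else e t ⟨a, ha⟩ with hf
    have hfS : ∀ ⦃p q : Fin N⦄, G.Adj p q → p ∈ (P t : Set (Fin N)) → q ∈ (P t : Set (Fin N)) := by
      intro p q hpq hp
      obtain ⟨t', hp', hq'⟩ := hadjpart hpq
      obtain rfl : t' = t := huniq hp' (by simpa using hp)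
      simpa using hq'
    have hfhom : ∀ ⦃p q : Fin N⦄, p ∈ (P t : Set (Fin N)) → q ∈ (P t : Set (Fin N)) →
        G.Adj p q → (GT t).Adj (f p) (f q) := by
      intro p q hp hq hpq
      have hp' : p ∈ P t := by simpa using hp
      have hq' : q ∈ P t := by simpa using hq
      rw [hf]
      simp only [dif_pos hp', dif_pos hq']
      exact (hadj hp' hq').mp hpq
    have hfinj : Set.InjOn f (P t : Set (Fin N)) := by
      intro p hp q hq hpq
      have hp' : p ∈ P t := by simpa using hp
      have hq' : q ∈ P t := by simpa using hq
      rw [hf] at hpq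
      simp only [dif_pos hp', dif_pos hq'] at hpq
      have := (e t).injective hpq
      exact congrArg Subtype.val this
    obtain ⟨q, hq, hlenq⟩ := cycle_lift f (P t : Set (Fin N)) hfS hfhom hfinj w
      (by simpa using ha) hw
    have h1 : (GT t).girth ≤ q.length := girth_le_of_cycle hq
    have h2 := hgirth t
    omega
  -- the blocks
  let B : Multiset (Finset (Fin N)) :=
    (∑ t : ι, ((BT t).map fun b => b.image (emb t))) + ℬ.val
  have hmemimg : ∀ {t : ι} {b : Finset (Fin (sz t))} {x : Fin N},
      x ∈ b.image (emb t) ↔ ∃ hx : x ∈ P t, e t ⟨x, hx⟩ ∈ b := by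
    intro t b x
    rw [Finset.mem_image]
    constructor
    · rintro ⟨a, ha, rfl⟩
      exact ⟨hembmem t a, by rw [he_emb]; exact ha⟩
    · rintro ⟨hx, h⟩
      exact ⟨e t ⟨x, hx⟩, h, hemb_e t x hx⟩
  refine ⟨G, B, fun v => by convert hregG (fun _ => inferInstance) v, hgirthG, ⟨?_, ?_⟩, fun x y h => hadjpart h⟩
  · -- block sizes
    intro b hb
    rcases Multiset.mem_add.mp hb with hb | hb
    · rw [Multiset.mem_sum] at hb
      obtain ⟨t, -, hb⟩ := hb
      obtain ⟨b0, hb0, rfl⟩ := Multiset.mem_map.mp hb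
      rw [Finset.card_image_of_injective _ (hembinj t)]
      exact (hdes t).1 b0 hb0
    · exact hsize b hb
  · -- pair counts
    intro x y hxy
    have hBsplit : Multiset.card (B.filter fun b => x ∈ b ∧ y ∈ b)
        = (∑ t : ι, Multiset.card (((BT t).map fun b => b.image (emb t)).filter
            fun b => x ∈ b ∧ y ∈ b))
          + Multiset.card (ℬ.val.filter fun b => x ∈ b ∧ y ∈ b) := by
      rw [Multiset.filter_add, Multiset.card_add, filter_card_sum]
    have hterm : ∀ t : ι,
        Multiset.card (((BT t).map fun b => b.image (emb t)).filter fun b => x ∈ b ∧ y ∈ b)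
        = Multiset.card ((BT t).filter
            fun b => x ∈ b.image (emb t) ∧ y ∈ b.image (emb t)) := by
      intro t
      rw [Multiset.filter_map, Multiset.card_map]
      rfl
    by_cases hcase : ∃ t, x ∈ P t ∧ y ∈ P t
    · obtain ⟨t, hx, hy⟩ := hcase
      have hzero : ∀ t' : ι, t' ≠ t →
          Multiset.card (((BT t').map fun b => b.image (emb t')).filter
            fun b => x ∈ b ∧ y ∈ b) = 0 := by
        intro t' hne
        rw [hterm t', Multiset.card_eq_zero, Multiset.filter_eq_nil]
        rintro b hb ⟨hxb, hyb⟩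
        obtain ⟨hx', -⟩ := hmemimg.mp hxb
        exact hne (huniq hx' hx)
      have hmain : Multiset.card (((BT t).map fun b => b.image (emb t)).filter
          fun b => x ∈ b ∧ y ∈ b) = if G.Adj x y then 2 else 1 := by
        rw [hterm t]
        have hcong : ((BT t).filter fun b => x ∈ b.image (emb t) ∧ y ∈ b.image (emb t))
            = ((BT t).filter fun b => e t ⟨x, hx⟩ ∈ b ∧ e t ⟨y, hy⟩ ∈ b) := by
          apply Multiset.filter_congr
          intro b hb
          constructor
          · rintro ⟨h1, h2⟩
            obtain ⟨hx1, h1⟩ := hmemimg.mp h1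
            obtain ⟨hy1, h2⟩ := hmemimg.mp h2
            exact ⟨h1, h2⟩
          · rintro ⟨h1, h2⟩
            exact ⟨hmemimg.mpr ⟨hx, h1⟩, hmemimg.mpr ⟨hy, h2⟩⟩
        rw [hcong]
        have hne : e t ⟨x, hx⟩ ≠ e t ⟨y, hy⟩ := by
          intro h
          exact hxy (congrArg Subtype.val ((e t).injective h))
        rw [(hdes t).2 _ _ hne]
        by_cases hA : G.Adj x y
        · rw [if_pos hA, if_pos ((hadj hx hy).mp hA)]
        · rw [if_neg hA, if_neg (fun h => hA ((hadj hx hy).mpr h))]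
      have hBzero : Multiset.card (ℬ.val.filter fun b => x ∈ b ∧ y ∈ b) = 0 := by
        rw [Multiset.card_eq_zero, Multiset.filter_eq_nil]
        intro b hb
        exact hsame x y hxy ⟨t, hx, hy⟩ b hb
      rw [hBsplit, hBzero, Finset.sum_eq_single t (fun t' _ h => hzero t' h) (by simp), hmain]
      simp
    · have hzero : ∀ t' : ι,
          Multiset.card (((BT t').map fun b => b.image (emb t')).filter
            fun b => x ∈ b ∧ y ∈ b) = 0 := by
        intro t'
        rw [hterm t', Multiset.card_eq_zero, Multiset.filter_eq_nil]
        rintro b hb ⟨hxb, hyb⟩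
        obtain ⟨hx', -⟩ := hmemimg.mp hxb
        obtain ⟨hy', -⟩ := hmemimg.mp hyb
        exact hcase ⟨t', hx', hy'⟩
      have hBone : Multiset.card (ℬ.val.filter fun b => x ∈ b ∧ y ∈ b) = 1 := by
        have := hcross x y hxy hcase
        rw [Finset.card_def, Finset.filter_val] at this
        convert this using 2
      have hnadj : ¬ G.Adj x y := fun h => hcase (hadjpart h)
      rw [hBsplit, hBone, Finset.sum_eq_zero (fun t' _ => hzero t'), if_neg hnadj]

/-- Wilson-style construction. Given regular-graph designs of
orders g and m and a (δ+1)-GDD of type gᵘ m¹, there is a regular-graph design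
of order gu + m whose graph is δ-regular with girth ≥ 5 and is the disjoint
union of graphs placed on the groups. -/
theorem stmt_18 (δ g m u : ℕ) (hδ : 1 ≤ δ)
    (hg : ExistsRGD δ g) (hm : ExistsRGD δ m)
    (groups : Fin u → Finset (Fin (g * u + m)))
    (M : Finset (Fin (g * u + m)))
    (ℬ : Finset (Finset (Fin (g * u + m))))
    (hgsz : ∀ i, (groups i).card = g) (hMsz : M.card = m)
    (hdisj : ∀ i j, i ≠ j → Disjoint (groups i) (groups j))
    (hdisjM : ∀ i, Disjoint (groups i) M)
    (hcover : ∀ x, (∃ i, x ∈ groups i) ∨ x ∈ M)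
    (hbsize : ∀ b ∈ ℬ, b.card = δ + 1)
    (hsame : ∀ x y : Fin (g * u + m), x ≠ y →
      ((∃ i, x ∈ groups i ∧ y ∈ groups i) ∨ (x ∈ M ∧ y ∈ M)) →
      ∀ b ∈ ℬ, ¬(x ∈ b ∧ y ∈ b))
    (hcross : ∀ x y : Fin (g * u + m), x ≠ y →
      ¬((∃ i, x ∈ groups i ∧ y ∈ groups i) ∨ (x ∈ M ∧ y ∈ M)) →
      (ℬ.filter fun b => x ∈ b ∧ y ∈ b).card = 1) :
    ∃ (G : SimpleGraph (Fin (g * u + m))) (B : Multiset (Finset (Fin (g * u + m)))),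
      G.IsRegularOfDegree δ ∧ 5 ≤ G.girth ∧ IsRGDesign δ G B ∧
      ∀ x y, G.Adj x y →
        ((∃ i, x ∈ groups i ∧ y ∈ groups i) ∨ (x ∈ M ∧ y ∈ M)) := by
  obtain ⟨Gg, Bg, hgreg, hggirth, hgdes⟩ := hg
  obtain ⟨Gm, Bm, hmreg, hmgirth, hmdes⟩ := hm
  haveI : Nonempty (Sum (Fin u) Unit) := ⟨Sum.inr ()⟩
  have hiff : ∀ x y : Fin (g * u + m),
      (∃ t : Sum (Fin u) Unit,
        x ∈ Sum.elim groups (fun _ => M) t ∧ y ∈ Sum.elim groups (fun _ => M) t)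
      ↔ ((∃ i, x ∈ groups i ∧ y ∈ groups i) ∨ (x ∈ M ∧ y ∈ M)) := by
    intro x y
    constructor
    · rintro ⟨(i | ⟨⟩), h⟩
      · exact Or.inl ⟨i, h⟩
      · exact Or.inr h
    · rintro (⟨i, h⟩ | h)
      · exact ⟨Sum.inl i, h⟩
      · exact ⟨Sum.inr (), h⟩
  obtain ⟨G, B, h1, h2, h3, h4⟩ := master (ι := Sum (Fin u) Unit) δ
    (Sum.elim (fun _ => g) (fun _ => m)) (Sum.elim groups (fun _ => M))
    (fun t => match t with | Sum.inl _ => Gg | Sum.inr _ => Gm)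
    (fun t => match t with | Sum.inl _ => Bg | Sum.inr _ => Bm)
    (fun t => match t with | Sum.inl i => hgsz i | Sum.inr _ => hMsz)
    (by
      rintro (i | ⟨⟩) (j | ⟨⟩) hne
      · exact hdisj i j (fun h => hne (by rw [h]))
      · exact hdisjM i
      · exact (hdisjM j).symm
      · exact absurd rfl hne)
    (by
      intro x
      rcases hcover x with ⟨i, h⟩ | h
      · exact ⟨Sum.inl i, h⟩
      · exact ⟨Sum.inr (), h⟩)
    (fun t => match t with | Sum.inl _ => hgreg | Sum.inr _ => hmreg)
    (fun t => match t with | Sum.inl _ => hggirth | Sum.inr _ => hmgirth)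
    (fun t => match t with | Sum.inl _ => hgdes | Sum.inr _ => hmdes)
    ℬ hbsize
    (fun x y hxy hex => hsame x y hxy ((hiff x y).mp hex))
    (fun x y hxy hnex => hcross x y hxy (fun h => hnex ((hiff x y).mpr h)))
  exact ⟨G, B, h1, h2, h3, fun x y hxy => (hiff x y).mp (h4 x y hxy)⟩
end
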